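/- arXiv:1510.09123 — 3 statements merged into one kernel-verified Lean document; each statement's English description precedes it below -/
import Mathlib

section
/- Let (P, H_w) be a smoothed range space of n points and (P, A) a linked binary range space, and let 0 < τ < ε < 1. If Q is an (ε−τ)-net of the binary range space (P, A), then Q is an (ε,τ)-net of (P, H_w). -/
open Finset
open scoped Classical

/-- If Q is an (ε−τ)-net of a binary range space (P, A) linked to the
smoothed range space (P, H_w), then Q is an (ε,τ)-net of (P, H_w). -/
theorem linked_eps_net {d : ℕ} (P Q : Finset (EuclideanSpace ℝ (Fin d)))
    (H : Set (EuclideanSpace ℝ (Fin d) → ℝ))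
    (A : Set (Set (EuclideanSpace ℝ (Fin d))))
    (ε τ : ℝ) (hτ : 0 < τ) (hτε : τ < ε) (hε : ε < 1)
    (hQP : Q ⊆ P)
    (hval : ∀ h ∈ H, ∀ p ∈ P, h p ∈ Set.Icc (0:ℝ) 1)
    (hlink : ∀ h ∈ H, ∀ t : ℝ, 0 < t → ∃ A0 ∈ A, ∀ p ∈ P, (t ≤ h p ↔ p ∈ A0))
    (hnet : ∀ A0 ∈ A, (ε - τ) * P.card ≤ ((P.filter (fun p => p ∈ A0)).card : ℝ) →
      ∃ q ∈ Q, q ∈ A0) :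
    ∀ h ∈ H, ε ≤ (∑ p ∈ P, h p) / P.card → ∃ q ∈ Q, τ ≤ h q := by
  intro h hH havg
  obtain ⟨A0, hA0, hiff⟩ := hlink h hH τ hτ
  rcases P.eq_empty_or_nonempty with hP | hP
  · exfalso
    simp [hP] at havg
    linarith
  have hn : (0:ℝ) < P.card := by exact_mod_cast Finset.card_pos.mpr hP
  -- sum bound: ∑ h p ≤ |S| + τ * (n - |S|) where S = filter (τ ≤ h ·)
  set S := P.filter (fun p => τ ≤ h p) with hS
  have hsum : ∑ p ∈ P, h p ≤ S.card + τ * ((P.card : ℝ) - S.card) := by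
    have hsplit : ∑ p ∈ P, h p = ∑ p ∈ S, h p + ∑ p ∈ P \ S, h p := by
      rw [add_comm]; exact (Finset.sum_sdiff (Finset.filter_subset _ _)).symm
    have h1 : ∑ p ∈ S, h p ≤ (S.card : ℝ) := by
      calc ∑ p ∈ S, h p ≤ ∑ _p ∈ S, (1:ℝ) :=
            Finset.sum_le_sum (fun p hp => (hval h hH p (Finset.mem_filter.mp hp).1).2)
        _ = S.card := by simp
    have h2 : ∑ p ∈ P \ S, h p ≤ ∑ _p ∈ P \ S, τ := by
      refine Finset.sum_le_sum fun p hp => ?_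
      have hp' := Finset.mem_sdiff.mp hp
      have : ¬ τ ≤ h p := by
        intro hc
        exact hp'.2 (Finset.mem_filter.mpr ⟨hp'.1, hc⟩)
      linarith
    have hcard : ((P \ S).card : ℝ) = (P.card : ℝ) - S.card := by
      rw [Finset.card_sdiff_of_subset (Finset.filter_subset _ _)]
      have := Finset.card_filter_le P (fun p => τ ≤ h p)
      rw [Nat.cast_sub this]
    rw [hsplit]
    calc ∑ p ∈ S, h p + ∑ p ∈ P \ S, h p ≤ (S.card : ℝ) + ∑ _p ∈ P \ S, τ := by
          linarith
      _ = S.card + τ * ((P.card : ℝ) - S.card) := by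
          rw [Finset.sum_const, nsmul_eq_mul, hcard]; ring
  have hεsum : ε * P.card ≤ ∑ p ∈ P, h p := by
    rw [le_div_iff₀ hn] at havg
    linarith
  have hScard : (ε - τ) * P.card ≤ (S.card : ℝ) := by
    nlinarith [hsum, hεsum]
  have hSA : S = P.filter (fun p => p ∈ A0) := by
    apply Finset.filter_congr
    intro p hp
    simp [hiff p hp]
  obtain ⟨q, hqQ, hqA⟩ := hnet A0 hA0 (by rw [← hSA]; exact hScard)
  exact ⟨q, hqQ, (hiff q (hQP hqQ)).mpr hqA⟩
end

section
/- Let (P, H_w) be a smoothed range space and (P, A) a linked binary range space. If Q ⊆ P is an ε-sample of (P, A), then Q is an ε-sample of (P, H_w), i.e., |sde_P(h) − sde_Q(h)| ≤ ε for all h ∈ H_w. -/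
open Finset
open scoped Classical

private lemma layer_cake_aux {α : Type*} [DecidableEq α] (ε : ℝ) (hε : 0 ≤ ε)
    (P Q : Finset α) (hQP : Q ⊆ P) :
    ∀ k : ℕ, ∀ f : α → ℝ, ∀ M : ℝ, 0 ≤ M →
    (∀ p ∈ P, f p ∈ Set.Icc (0:ℝ) M) →
    ((P.image f).filter (fun v => 0 < v)).card = k →
    (∀ t : ℝ, 0 < t →
      |((P.filter (fun p => t ≤ f p)).card : ℝ) / P.card -
        ((Q.filter (fun p => t ≤ f p)).card : ℝ) / Q.card| ≤ ε) →
    |(∑ p ∈ P, f p) / P.card - (∑ q ∈ Q, f q) / Q.card| ≤ M * ε := by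
  intro k
  induction k using Nat.strong_induction_on with
  | _ k ih =>
    intro f M hM hval hcard hthr
    rcases Nat.eq_zero_or_pos k with hk | hk
    · -- all values are 0
      have hz : ∀ p ∈ P, f p = 0 := by
        intro p hp
        by_contra hne
        have hpos : 0 < f p := lt_of_le_of_ne (hval p hp).1 (Ne.symm hne)
        have : f p ∈ (P.image f).filter (fun v => 0 < v) := by
          simp only [mem_filter, mem_image]
          exact ⟨⟨p, hp, rfl⟩, hpos⟩
        have := card_pos.mpr ⟨_, this⟩
        omega
      have h1 : (∑ p ∈ P, f p) = 0 := Finset.sum_eq_zero hz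
      have h2 : (∑ q ∈ Q, f q) = 0 := Finset.sum_eq_zero (fun q hq => hz q (hQP hq))
      rw [h1, h2]
      simpa using mul_nonneg hM hε
    · -- positive values exist
      have hne : ((P.image f).filter (fun v => 0 < v)).Nonempty := by
        rw [← card_pos, hcard]; exact hk
      set T := (P.image f).filter (fun v => 0 < v) with hT
      set m := T.min' hne with hm
      have hmT : m ∈ T := T.min'_mem hne
      have hm0 : 0 < m := (mem_filter.mp hmT).2
      obtain ⟨p0, hp0, hfp0⟩ := mem_image.mp (mem_filter.mp hmT).1
      have hmM : m ≤ M := hfp0 ▸ (hval p0 hp0).2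
      have hmin : ∀ p ∈ P, 0 < f p → m ≤ f p := by
        intro p hp hpos
        apply T.min'_le
        simp only [hT, mem_filter, mem_image]
        exact ⟨⟨p, hp, rfl⟩, hpos⟩
      -- zero or ≥ m
      have hdich : ∀ p ∈ P, f p = 0 ∨ m ≤ f p := by
        intro p hp
        rcases lt_or_eq_of_le (hval p hp).1 with h | h
        · exact Or.inr (hmin p hp h)
        · exact Or.inl h.symm
      set f' : α → ℝ := fun p => if m ≤ f p then f p - m else f p with hf'
      -- pointwise decomposition
      have hdec : ∀ p, f p = f' p + (if m ≤ f p then m else 0) := by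
        intro p; simp only [hf']; split <;> ring
      -- values of f'
      have hval' : ∀ p ∈ P, f' p ∈ Set.Icc (0:ℝ) (M - m) := by
        intro p hp
        rcases hdich p hp with h | h
        · have : ¬ m ≤ f p := by rw [h]; linarith
          simp only [hf', if_neg this, h]
          exact ⟨le_refl _, by linarith⟩
        · simp only [hf', if_pos h]
          exact ⟨by linarith, by linarith [(hval p hp).2]⟩
      -- positive values of f'
      have himg : (P.image f').filter (fun v => 0 < v)
          = (T.erase m).image (fun v => v - m) := by
        ext v
        simp only [mem_filter, mem_image, mem_erase, hT]
        constructor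
        · rintro ⟨⟨p, hp, rfl⟩, hpos⟩
          rcases hdich p hp with h | h
          · exfalso
            have : ¬ m ≤ f p := by rw [h]; linarith
            simp only [hf', if_neg this, h] at hpos
            exact lt_irrefl _ hpos
          · simp only [hf', if_pos h] at hpos ⊢
            refine ⟨f p, ⟨by intro he; rw [he] at hpos; linarith, ⟨⟨p, hp, rfl⟩, by linarith⟩⟩, rfl⟩
        · rintro ⟨w, ⟨hwm, ⟨⟨p, hp, rfl⟩, hwpos⟩⟩, rfl⟩
          have hge : m ≤ f p := hmin p hp hwpos
          have hgt : m < f p := lt_of_le_of_ne hge (fun he => hwm he.symm)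
          exact ⟨⟨p, hp, by simp only [hf', if_pos hge]⟩, by linarith⟩
      have hcard' : ((P.image f').filter (fun v => 0 < v)).card = k - 1 := by
        rw [himg, Finset.card_image_of_injective _ (fun a b h => by linarith),
          card_erase_of_mem hmT, hcard]
      -- threshold sets for f'
      have hthr' : ∀ t : ℝ, 0 < t →
          |((P.filter (fun p => t ≤ f' p)).card : ℝ) / P.card -
            ((Q.filter (fun p => t ≤ f' p)).card : ℝ) / Q.card| ≤ ε := by
        intro t ht
        have key : ∀ p ∈ P, (t ≤ f' p ↔ t + m ≤ f p) := by
          intro p hp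
          rcases hdich p hp with h | h
          · have hnot : ¬ m ≤ f p := by rw [h]; linarith
            simp only [hf', if_neg hnot, h]
            constructor <;> intro hh <;> linarith
          · simp only [hf', if_pos h]
            constructor <;> intro hh <;> linarith
        have e1 : P.filter (fun p => t ≤ f' p) = P.filter (fun p => t + m ≤ f p) :=
          filter_congr (fun p hp => by simpa using key p hp)
        have e2 : Q.filter (fun p => t ≤ f' p) = Q.filter (fun p => t + m ≤ f p) :=
          filter_congr (fun q hq => by simpa using key q (hQP hq))
        rw [e1, e2]
        exact hthr (t + m) (by linarith)
      -- sum decomposition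
      have hsum : ∀ S : Finset α, (∑ p ∈ S, f p)
          = (∑ p ∈ S, f' p) + m * ((S.filter (fun p => m ≤ f p)).card : ℝ) := by
        intro S
        have : (∑ p ∈ S, f p) = (∑ p ∈ S, (f' p + if m ≤ f p then m else 0)) :=
          Finset.sum_congr rfl (fun p _ => hdec p)
        rw [this, Finset.sum_add_distrib, ← Finset.sum_filter, Finset.sum_const, nsmul_eq_mul]
        ring
      have ihy := ih (k - 1) (by omega) f' (M - m) (by linarith) hval' hcard' hthr'
      have hthm := hthr m hm0
      have expand : (∑ p ∈ P, f p) / P.card - (∑ q ∈ Q, f q) / Q.card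
          = ((∑ p ∈ P, f' p) / P.card - (∑ q ∈ Q, f' q) / Q.card)
            + m * (((P.filter (fun p => m ≤ f p)).card : ℝ) / P.card
                 - ((Q.filter (fun p => m ≤ f p)).card : ℝ) / Q.card) := by
        rw [hsum P, hsum Q]; ring
      rw [expand]
      calc |_ + _| ≤ _ + |m * _| := abs_add_le _ _
        _ ≤ (M - m) * ε + m * ε := by
            refine add_le_add ihy ?_
            rw [abs_mul, abs_of_pos hm0]
            exact mul_le_mul_of_nonneg_left hthm (le_of_lt hm0)
        _ = M * ε := by ring


/-- An ε-sample of a linked binary range space (P, A) is also an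
ε-sample of the smoothed range space (P, H_w). -/
theorem linked_eps_sample {d : ℕ} (P Q : Finset (EuclideanSpace ℝ (Fin d)))
    (H : Set (EuclideanSpace ℝ (Fin d) → ℝ))
    (A : Set (Set (EuclideanSpace ℝ (Fin d))))
    (ε : ℝ) (hε : 0 < ε)
    (hQP : Q ⊆ P)
    (hval : ∀ h ∈ H, ∀ p ∈ P, h p ∈ Set.Icc (0:ℝ) 1)
    (hlink : ∀ h ∈ H, ∀ t : ℝ, 0 < t → ∃ A0 ∈ A, ∀ p ∈ P, (t ≤ h p ↔ p ∈ A0))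
    (hsamp : ∀ A0 ∈ A,
      |((P.filter (fun p => p ∈ A0)).card : ℝ) / P.card -
        ((Q.filter (fun p => p ∈ A0)).card : ℝ) / Q.card| ≤ ε) :
    ∀ h ∈ H, |(∑ p ∈ P, h p) / P.card - (∑ q ∈ Q, h q) / Q.card| ≤ ε := by
  intro h hH
  have := layer_cake_aux ε (le_of_lt hε) P Q hQP
    ((P.image h).filter (fun v => 0 < v)).card h 1 zero_le_one
    (hval h hH) rfl ?_
  · simpa using this
  · intro t ht
    obtain ⟨A0, hA0, hiff⟩ := hlink h hH t ht
    have e1 : P.filter (fun p => t ≤ h p) = P.filter (fun p => p ∈ A0) :=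
      filter_congr (fun p hp => by simpa using hiff p hp)
    have e2 : Q.filter (fun p => t ≤ h p) = Q.filter (fun p => p ∈ A0) :=
      filter_congr (fun q hq => by simpa using hiff q (hQP hq))
    rw [e1, e2]
    exact hsamp A0 hA0
end

section
/- Let p, p', q, q' be points in ℝ^d and let p_B, q_B be points on segment pq and p'_B, q'_B points on segment p'q'. If ‖p_B − p'_B‖ + ‖q_B − q'_B‖ < ‖p_B − q_B‖ + ‖p'_B − q'_B‖, then ‖p − p'‖ + ‖q − q'‖ < ‖p − q‖ + ‖p' − q'‖. -/
/-- the exchange argument.  If p_B, q_B lie (in order) on segment pq and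
p'_B, q'_B lie (in order) on segment p'q', and the cross distances
‖p_B−p'_B‖ + ‖q_B−q'_B‖ are smaller than ‖p_B−q_B‖ + ‖p'_B−q'_B‖, then swapping the
matching edges strictly decreases the cost: ‖p−p'‖ + ‖q−q'‖ < ‖p−q‖ + ‖p'−q'‖. -/
theorem exchange_argument {d : ℕ}
    (p q p' q' pB qB pB' qB' : EuclideanSpace ℝ (Fin d))
    (h1 : ‖p - q‖ = ‖p - pB‖ + ‖pB - qB‖ + ‖qB - q‖)
    (h2 : ‖p' - q'‖ = ‖p' - pB'‖ + ‖pB' - qB'‖ + ‖qB' - q'‖)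
    (h3 : ‖pB - pB'‖ + ‖qB - qB'‖ < ‖pB - qB‖ + ‖pB' - qB'‖) :
    ‖p - p'‖ + ‖q - q'‖ < ‖p - q‖ + ‖p' - q'‖ := by
  have t1 : ‖p - p'‖ ≤ ‖p - pB‖ + ‖pB - pB'‖ + ‖pB' - p'‖ := norm_sub_le_norm_sub_add_norm_sub _ _ _ |>.trans (by
    gcongr; exact norm_sub_le_norm_sub_add_norm_sub _ _ _)
  have t2 : ‖q - q'‖ ≤ ‖q - qB‖ + ‖qB - qB'‖ + ‖qB' - q'‖ := norm_sub_le_norm_sub_add_norm_sub _ _ _ |>.trans (by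
    gcongr; exact norm_sub_le_norm_sub_add_norm_sub _ _ _)
  have e1 : ‖qB - q‖ = ‖q - qB‖ := norm_sub_rev _ _
  have e2 : ‖p' - pB'‖ = ‖pB' - p'‖ := norm_sub_rev _ _
  linarith
end
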